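/- Define the graph JK(N,k) with vertex set P_k([N]) × {0,1}, where (S,i) and (T,j) are adjacent iff (i = j and |S ∩ T| = k−1) or (i ≠ j and S ∩ T = ∅). Then the map from the vertices of J(2k,k) to the vertices of JK(2k−1,k−1) given by S ↦ (S\{2k}, 0) if 2k ∈ S and S ↦ ([2k−1]\S, 1) if 2k ∉ S, is a graph isomorphism from J(2k,k) to JK(2k−1,k−1). -/

import Mathlib

/-- The Johnson graph `J(N, k)`, with vertices the `k`-element subsets of
`[N] = {0, …, N-1} ⊆ ℕ`. -/
def johnsonN (N k : ℕ) : SimpleGraph {S : Finset ℕ // S ⊆ Finset.range N ∧ S.card = k} where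
  Adj S T := S ≠ T ∧ (S.1 ∩ T.1).card = k - 1
  symm := by
    constructor
    intro S T h
    exact ⟨h.1.symm, by rw [Finset.inter_comm]; exact h.2⟩
  loopless := by
    constructor
    intro S h
    exact h.1 rfl

/-- The graph `JK(N, k)`: two copies of the `k`-subsets of `[N]`;
`(S, i)` and `(T, j)` are adjacent iff `i = j` and `|S ∩ T| = k - 1`
(with `S ≠ T`), or `i ≠ j` and `S ∩ T = ∅`. -/
def JK (N k : ℕ) :
    SimpleGraph ({S : Finset ℕ // S ⊆ Finset.range N ∧ S.card = k} × Bool) where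
  Adj P Q := (P.2 = Q.2 ∧ P.1 ≠ Q.1 ∧ (P.1.1 ∩ Q.1.1).card = k - 1) ∨
    (P.2 ≠ Q.2 ∧ P.1.1 ∩ Q.1.1 = ∅)
  symm := by
    constructor
    intro P Q h
    rcases h with ⟨h1, h2, h3⟩ | ⟨h1, h2⟩
    · exact Or.inl ⟨h1.symm, h2.symm, by rw [Finset.inter_comm]; exact h3⟩
    · exact Or.inr ⟨h1.symm, by rw [Finset.inter_comm]; exact h2⟩
  loopless := by
    constructor
    intro P h
    rcases h with ⟨_, h2, _⟩ | ⟨h1, _⟩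
    · exact h2 rfl
    · exact h1 rfl

abbrev JV (N k : ℕ) := {S : Finset ℕ // S ⊆ Finset.range N ∧ S.card = k}

lemma sub_small {k : ℕ} (S : JV (2*k) k) (h : 2*k-1 ∉ S.1) :
    S.1 ⊆ Finset.range (2*k-1) := by
  intro x hx
  have h1 := S.2.1 hx
  simp only [Finset.mem_range] at *
  have : x ≠ 2*k-1 := fun e => h (e ▸ hx)
  omega

def jkToFun (k : ℕ) (hk : 2 ≤ k) (S : JV (2*k) k) : JV (2*k-1) (k-1) × Bool :=
  if h : 2*k-1 ∈ S.1 then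
    (⟨S.1.erase (2*k-1), by
      refine ⟨fun x hx => ?_, ?_⟩
      · have hx' := Finset.mem_erase.mp hx
        have := S.2.1 hx'.2
        simp only [Finset.mem_range] at *
        omega
      · rw [Finset.card_erase_of_mem h, S.2.2]⟩, false)
  else
    (⟨Finset.range (2*k-1) \ S.1, by
      refine ⟨Finset.sdiff_subset, ?_⟩
      rw [Finset.card_sdiff_of_subset (sub_small S h), Finset.card_range, S.2.2]
      omega⟩, true)

def jkInvFun (k : ℕ) (hk : 2 ≤ k) : JV (2*k-1) (k-1) × Bool → JV (2*k) k
  | (T, false) =>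
    ⟨insert (2*k-1) T.1, by
      have hnm : 2*k-1 ∉ T.1 := fun h => by
        have := T.2.1 h; simp [Finset.mem_range] at this
      refine ⟨?_, ?_⟩
      · intro x hx
        rcases Finset.mem_insert.mp hx with rfl | hx
        · simp [Finset.mem_range]; omega
        · have := T.2.1 hx; simp only [Finset.mem_range] at *; omega
      · rw [Finset.card_insert_of_notMem hnm, T.2.2]; omega⟩
  | (T, true) =>
    ⟨Finset.range (2*k-1) \ T.1, by
      refine ⟨fun x hx => ?_, ?_⟩
      · have := (Finset.mem_sdiff.mp hx).1
        simp only [Finset.mem_range] at *; omega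
      · rw [Finset.card_sdiff_of_subset T.2.1, Finset.card_range, T.2.2]; omega⟩

lemma jk_left_inv (k : ℕ) (hk : 2 ≤ k) :
    Function.LeftInverse (jkInvFun k hk) (jkToFun k hk) := by
  intro S
  by_cases h : 2*k-1 ∈ S.1
  · simp only [jkToFun, dif_pos h, jkInvFun]
    exact Subtype.ext (Finset.insert_erase h)
  · simp only [jkToFun, dif_neg h, jkInvFun]
    exact Subtype.ext (Finset.sdiff_sdiff_eq_self (sub_small S h))

lemma jk_right_inv (k : ℕ) (hk : 2 ≤ k) :
    Function.RightInverse (jkInvFun k hk) (jkToFun k hk) := by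
  intro ⟨T, b⟩
  cases b
  · have hnm : 2*k-1 ∉ T.1 := fun h => by
      have := T.2.1 h; simp [Finset.mem_range] at this
    simp only [jkInvFun, jkToFun]
    refine (dif_pos (Finset.mem_insert_self (2*k-1) T.1)).trans ?_
    exact Prod.ext (Subtype.ext (Finset.erase_insert hnm)) rfl
  · have hnm : 2*k-1 ∉ Finset.range (2*k-1) \ T.1 := by
      simp [Finset.mem_sdiff]
    simp only [jkInvFun, jkToFun]
    refine (dif_neg hnm).trans ?_
    exact Prod.ext (Subtype.ext (Finset.sdiff_sdiff_eq_self T.2.1)) rfl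

lemma jk_case_in_in (k : ℕ) (hk : 2 ≤ k) (S T : JV (2*k) k)
    (hS : 2*k-1 ∈ S.1) (hT : 2*k-1 ∈ T.1) :
    (S.1.erase (2*k-1) ≠ T.1.erase (2*k-1) ∧
      ((S.1.erase (2*k-1)) ∩ (T.1.erase (2*k-1))).card = (k-1) - 1)
    ↔ (S ≠ T ∧ (S.1 ∩ T.1).card = k - 1) := by
  have hm : 2*k-1 ∈ S.1 ∩ T.1 := Finset.mem_inter.mpr ⟨hS, hT⟩
  have hcard : 1 ≤ (S.1 ∩ T.1).card := Finset.card_pos.mpr ⟨_, hm⟩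
  have hinter : (S.1.erase (2*k-1)) ∩ (T.1.erase (2*k-1)) = (S.1 ∩ T.1).erase (2*k-1) := by
    ext x; simp [Finset.mem_erase, Finset.mem_inter]; tauto
  rw [hinter, Finset.card_erase_of_mem hm]
  constructor
  · rintro ⟨h1, h2⟩
    refine ⟨fun e => h1 (by rw [e]), by omega⟩
  · rintro ⟨h1, h2⟩
    refine ⟨fun e => h1 (Subtype.ext ?_), by omega⟩
    have := congrArg (insert (2*k-1)) e
    rwa [Finset.insert_erase hS, Finset.insert_erase hT] at this

lemma jk_case_out_out (k : ℕ) (hk : 2 ≤ k) (S T : JV (2*k) k)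
    (hS : 2*k-1 ∉ S.1) (hT : 2*k-1 ∉ T.1) :
    (Finset.range (2*k-1) \ S.1 ≠ Finset.range (2*k-1) \ T.1 ∧
      ((Finset.range (2*k-1) \ S.1) ∩ (Finset.range (2*k-1) \ T.1)).card = (k-1) - 1)
    ↔ (S ≠ T ∧ (S.1 ∩ T.1).card = k - 1) := by
  have hS' := sub_small S hS
  have hT' := sub_small T hT
  have hU : (Finset.range (2*k-1) \ S.1) ∩ (Finset.range (2*k-1) \ T.1)
      = Finset.range (2*k-1) \ (S.1 ∪ T.1) := by
    ext x; simp [Finset.mem_sdiff, Finset.mem_inter, Finset.mem_union]; tauto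
  have hunion : S.1 ∪ T.1 ⊆ Finset.range (2*k-1) := Finset.union_subset hS' hT'
  have hcu : (S.1 ∪ T.1).card ≤ 2*k-1 := by
    have := Finset.card_le_card hunion; simpa using this
  have hkey : (S.1 ∪ T.1).card + (S.1 ∩ T.1).card = k + k := by
    rw [Finset.card_union_add_card_inter, S.2.2, T.2.2]
  rw [hU, Finset.card_sdiff_of_subset hunion, Finset.card_range]
  constructor
  · rintro ⟨h1, h2⟩
    refine ⟨fun e => h1 (by rw [e]), by omega⟩
  · rintro ⟨h1, h2⟩
    refine ⟨fun e => h1 (Subtype.ext ?_), by omega⟩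
    have := congrArg (Finset.range (2*k-1) \ ·) e
    simpa [Finset.sdiff_sdiff_eq_self hS', Finset.sdiff_sdiff_eq_self hT'] using this

lemma jk_case_mixed (k : ℕ) (hk : 2 ≤ k) (S T : JV (2*k) k)
    (hS : 2*k-1 ∈ S.1) (hT : 2*k-1 ∉ T.1) :
    (S.1.erase (2*k-1)) ∩ (Finset.range (2*k-1) \ T.1) = ∅
    ↔ (S ≠ T ∧ (S.1 ∩ T.1).card = k - 1) := by
  have hT' := sub_small T hT
  have hne : S ≠ T := fun e => hT (e ▸ hS)
  have hEsub : S.1.erase (2*k-1) ⊆ Finset.range (2*k-1) := by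
    intro x hx
    have hx' := Finset.mem_erase.mp hx
    have := S.2.1 hx'.2
    simp only [Finset.mem_range] at *
    omega
  have hIc : S.1 ∩ T.1 = (S.1.erase (2*k-1)) ∩ T.1 := by
    ext x; simp only [Finset.mem_inter, Finset.mem_erase]
    constructor
    · rintro ⟨h1, h2⟩; exact ⟨⟨fun e => hT (e ▸ h2), h1⟩, h2⟩
    · rintro ⟨⟨_, h1⟩, h2⟩; exact ⟨h1, h2⟩
  have hcardE : (S.1.erase (2*k-1)).card = k - 1 := by
    rw [Finset.card_erase_of_mem hS, S.2.2]
  constructor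
  · intro h
    refine ⟨hne, ?_⟩
    have hsub : S.1.erase (2*k-1) ⊆ T.1 := by
      intro x hx
      by_contra hxT
      have : x ∈ (S.1.erase (2*k-1)) ∩ (Finset.range (2*k-1) \ T.1) :=
        Finset.mem_inter.mpr ⟨hx, Finset.mem_sdiff.mpr ⟨hEsub hx, hxT⟩⟩
      simp [h] at this
    rw [hIc, Finset.inter_eq_left.mpr hsub, hcardE]
  · rintro ⟨-, h2⟩
    rw [hIc] at h2
    have hsub : S.1.erase (2*k-1) ⊆ T.1 := by
      have hle : (S.1.erase (2*k-1)).card ≤ ((S.1.erase (2*k-1)) ∩ T.1).card := by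
        rw [h2, hcardE]
      have := Finset.eq_of_subset_of_card_le Finset.inter_subset_left hle
      rw [← this]; exact Finset.inter_subset_right
    ext x
    simp only [Finset.mem_inter, Finset.mem_sdiff, Finset.notMem_empty, iff_false]
    rintro ⟨h1, -, h3⟩
    exact h3 (hsub h1)

lemma jk_adj_mixed (k : ℕ) (hk : 2 ≤ k) (S T : JV (2*k) k)
    (hS : 2*k-1 ∈ S.1) (hT : 2*k-1 ∉ T.1) :
    (JK (2*k-1) (k-1)).Adj (jkToFun k hk S) (jkToFun k hk T)
      ↔ (johnsonN (2*k) k).Adj S T := by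
  show _ ∨ _ ↔ _ ∧ _
  simp only [jkToFun, dif_pos hS, dif_neg hT]
  rw [← jk_case_mixed k hk S T hS hT]
  constructor
  · rintro (⟨h1, -⟩ | ⟨-, h2⟩)
    · exact absurd h1 (by simp)
    · exact h2
  · intro h
    exact Or.inr ⟨by simp, h⟩

lemma jk_adj_iff (k : ℕ) (hk : 2 ≤ k) (S T : JV (2*k) k) :
    (JK (2*k-1) (k-1)).Adj (jkToFun k hk S) (jkToFun k hk T)
      ↔ (johnsonN (2*k) k).Adj S T := by
  by_cases hS : 2*k-1 ∈ S.1 <;> by_cases hT : 2*k-1 ∈ T.1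
  · show _ ∨ _ ↔ _ ∧ _
    simp only [jkToFun, dif_pos hS, dif_pos hT]
    rw [← jk_case_in_in k hk S T hS hT]
    constructor
    · rintro (⟨-, h2, h3⟩ | ⟨h1, -⟩)
      · exact ⟨fun e => h2 (Subtype.ext e), h3⟩
      · exact absurd rfl h1
    · rintro ⟨h1, h2⟩
      exact Or.inl ⟨trivial, fun e => h1 (congrArg Subtype.val e), h2⟩
  · exact jk_adj_mixed k hk S T hS hT
  · rw [(JK (2*k-1) (k-1)).adj_comm, (johnsonN (2*k) k).adj_comm]
    exact jk_adj_mixed k hk T S hT hS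
  · show _ ∨ _ ↔ _ ∧ _
    simp only [jkToFun, dif_neg hS, dif_neg hT]
    rw [← jk_case_out_out k hk S T hS hT]
    constructor
    · rintro (⟨-, h2, h3⟩ | ⟨h1, -⟩)
      · exact ⟨fun e => h2 (Subtype.ext e), h3⟩
      · exact absurd rfl h1
    · rintro ⟨h1, h2⟩
      exact Or.inl ⟨trivial, fun e => h1 (congrArg Subtype.val e), h2⟩

theorem johnson_iso_JK (k : ℕ) (hk : 2 ≤ k) :
    ∃ f : johnsonN (2 * k) k ≃g JK (2 * k - 1) (k - 1),
      ∀ S : {S : Finset ℕ // S ⊆ Finset.range (2 * k) ∧ S.card = k},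
        if 2 * k - 1 ∈ S.1 then
          ((f S).1.1 = S.1.erase (2 * k - 1) ∧ (f S).2 = false)
        else
          ((f S).1.1 = Finset.range (2 * k - 1) \ S.1 ∧ (f S).2 = true) := by
  refine ⟨⟨⟨jkToFun k hk, jkInvFun k hk, jk_left_inv k hk, jk_right_inv k hk⟩,
    fun {S T} => jk_adj_iff k hk S T⟩, fun S => ?_⟩
  by_cases h : 2*k-1 ∈ S.1
  · simp only [if_pos h]
    constructor <;> simp [RelIso.coe_fn_mk, Equiv.coe_fn_mk, jkToFun, dif_pos h]
  · simp only [if_neg h]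
    constructor <;> simp [RelIso.coe_fn_mk, Equiv.coe_fn_mk, jkToFun, dif_neg h]
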